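/- arXiv:1305.6298 — 4 statements merged into one kernel-verified Lean document; each statement's English description precedes it below -/
import Mathlib

section
/- Let R be a commutative ring with a derivation δ, let g ∈ R, and let ε ≥ 1 and j ≥ 0 be integers. Then δ^{jε}(g^ε) = ((jε)!/(j!)^ε)·(δ^j g)^ε + Σ_{l=0}^{j−1} p_l · δ^l g for some elements p_l ∈ R. That is, the (jε)-th derivative of g^ε equals the multinomial coefficient (jε)!/(j!)^ε times (δ^j g)^ε plus an element of the ideal generated by g, δg, …, δ^{j−1}g. -/
open Finset

section Aux
variable {R : Type*} [CommRing R] [Algebra ℚ R] (δ : Derivation ℚ R R)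

theorem iter_leibniz (a b : R) (n : ℕ) :
    (⇑δ)^[n] (a * b) =
      ∑ k ∈ range (n + 1), n.choose k • ((⇑δ)^[k] a * (⇑δ)^[n - k] b) := by
  induction n with
  | zero => simp
  | succ n ih =>
    rw [Function.iterate_succ_apply', ih, map_sum]
    have step : ∀ k ∈ range (n+1), δ (n.choose k • ((⇑δ)^[k] a * (⇑δ)^[n - k] b)) =
        n.choose k • ((⇑δ)^[k+1] a * (⇑δ)^[n-k] b)
      + n.choose k • ((⇑δ)^[k] a * (⇑δ)^[n+1-k] b) := by
      intro k hk
      simp only [mem_range] at hk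
      have : n + 1 - k = n - k + 1 := by omega
      rw [this, map_nsmul, Derivation.leibniz, smul_eq_mul, smul_eq_mul,
        Function.iterate_succ_apply', Function.iterate_succ_apply', smul_add]
      ring_nf
    rw [Finset.sum_congr rfl step, Finset.sum_add_distrib]
    rw [Finset.sum_range_succ' (fun k => (n+1).choose k • ((⇑δ)^[k] a * (⇑δ)^[n+1-k] b)) (n+1)]
    simp only [Nat.choose_succ_succ, Nat.succ_sub_succ, add_smul, Finset.sum_add_distrib,
      Nat.choose_zero_right, one_smul, Nat.sub_zero, Function.iterate_zero_apply]
    rw [Finset.sum_range_succ' (fun k => n.choose k • ((⇑δ)^[k] a * (⇑δ)^[n+1-k] b)) n]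
    rw [Finset.sum_range_succ (fun k => n.choose (k+1) • ((⇑δ)^[k+1] a * (⇑δ)^[n-k] b)) n]
    simp only [Nat.succ_sub_succ, Nat.choose_succ_self, zero_smul, add_zero,
      Nat.choose_zero_right, one_smul, Nat.sub_zero, Function.iterate_zero_apply]
    abel

theorem lemA (g : R) (j : ℕ) : ∀ ε m : ℕ, m < j * ε →
    (⇑δ)^[m] (g ^ ε) ∈ Submodule.span R (Set.range fun l : Fin j => (⇑δ)^[l.1] g) := by
  intro ε
  induction ε with
  | zero => intro m hm; omega
  | succ ε ih =>
    intro m hm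
    rw [pow_succ, mul_comm (g^ε) g, iter_leibniz]
    refine Submodule.sum_mem _ fun k hk => ?_
    simp only [mem_range] at hk
    by_cases hkj : k < j
    · have : (m.choose k) • ((⇑δ)^[k] g * (⇑δ)^[m - k] (g^ε))
          = ((m.choose k : R) * (⇑δ)^[m-k] (g^ε)) • (⇑δ)^[k] g := by
        simp only [smul_eq_mul, nsmul_eq_mul]; ring
      rw [this]
      exact Submodule.smul_mem _ _ (Submodule.subset_span ⟨⟨k, hkj⟩, rfl⟩)
    · have hsub : m - k < j * ε := by
        have h0 : j = 0 → j * ε = 0 := by intro h; simp [h]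
        have h1 : j * (ε+1) = j * ε + j := by ring
        omega
      have : (m.choose k) • ((⇑δ)^[k] g * (⇑δ)^[m - k] (g^ε))
          = ((m.choose k : R) * (⇑δ)^[k] g) • (⇑δ)^[m-k] (g^ε) := by
        simp only [smul_eq_mul, nsmul_eq_mul]; ring
      rw [this]
      exact Submodule.smul_mem _ _ (ih _ hsub)

theorem Mspec (j ε : ℕ) :
    Nat.multinomial (univ : Finset (Fin ε)) (fun _ => j) * (Nat.factorial j)^ε
      = Nat.factorial (j * ε) := by
  have := Nat.multinomial_spec (univ : Finset (Fin ε)) (fun _ => j)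
  simp only [Finset.prod_const, Finset.sum_const, card_univ, Fintype.card_fin, smul_eq_mul] at this
  rw [mul_comm, this, mul_comm]

theorem Mstep (j ε : ℕ) :
    Nat.multinomial (univ : Finset (Fin (ε+1))) (fun _ => j)
      = (j * ε + j).choose j * Nat.multinomial (univ : Finset (Fin ε)) (fun _ => j) := by
  have hpos : 0 < (Nat.factorial j)^(ε+1) := pow_pos (Nat.factorial_pos j) _
  apply Nat.eq_of_mul_eq_mul_right hpos
  rw [Mspec]
  have hch := Nat.choose_mul_factorial_mul_factorial (Nat.le_add_left j (j*ε))
  rw [Nat.add_sub_cancel] at hch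
  calc (j * (ε+1)).factorial = ((j*ε+j).choose j * j.factorial) * (j*ε).factorial := by
        rw [show j*(ε+1) = j*ε + j from by ring, ← hch]
    _ = (j*ε+j).choose j * Nat.multinomial (univ : Finset (Fin ε)) (fun _ => j)
          * (Nat.factorial j)^(ε+1) := by
        rw [← Mspec j ε]; ring

theorem mainMem (g : R) (j : ℕ) : ∀ ε : ℕ, 1 ≤ ε →
    (⇑δ)^[j * ε] (g ^ ε)
        - (Nat.multinomial (univ : Finset (Fin ε)) (fun _ => j) : R) * ((⇑δ)^[j] g) ^ ε
      ∈ Submodule.span R (Set.range fun l : Fin j => (⇑δ)^[l.1] g) := by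
  intro ε hε
  induction ε, hε using Nat.le_induction with
  | base =>
    have hM : Nat.multinomial (univ : Finset (Fin 1)) (fun _ => j) = 1 :=
      Nat.eq_of_mul_eq_mul_right (Nat.factorial_pos j) (by simpa using Mspec j 1)
    simp [hM]
  | succ ε hε ih =>
    have hj : j ∈ range (j*ε + j + 1) := by simp [Nat.lt_succ_iff]
    have key : (⇑δ)^[j * (ε+1)] (g ^ (ε+1))
        - (Nat.multinomial (univ : Finset (Fin (ε+1))) (fun _ => j) : R) * ((⇑δ)^[j] g) ^ (ε+1)
        = (((j*ε+j).choose j : R) * (⇑δ)^[j] g) •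
            ((⇑δ)^[j*ε] (g^ε)
              - (Nat.multinomial (univ : Finset (Fin ε)) (fun _ => j) : R) * ((⇑δ)^[j] g) ^ ε)
          + ∑ k ∈ (range (j*ε+j+1)).erase j,
              (j*ε+j).choose k • ((⇑δ)^[k] g * (⇑δ)^[j*ε+j-k] (g^ε)) := by
      rw [show j*(ε+1) = j*ε+j from by ring, pow_succ, mul_comm (g^ε) g, iter_leibniz,
        ← Finset.add_sum_erase _ _ hj, Nat.add_sub_cancel]
      have hM : (Nat.multinomial (univ : Finset (Fin (ε+1))) (fun _ => j) : R)
          = ((j*ε+j).choose j : R) * (Nat.multinomial (univ : Finset (Fin ε)) (fun _ => j) : R) := by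
        rw [Mstep]; push_cast; ring
      rw [hM]
      simp only [smul_eq_mul, nsmul_eq_mul]
      ring
    rw [key]
    refine add_mem (Submodule.smul_mem _ _ ih) (Submodule.sum_mem _ fun k hk => ?_)
    simp only [Finset.mem_erase, mem_range] at hk
    obtain ⟨hkj, hkle⟩ := hk
    by_cases h : k < j
    · have : ((j*ε+j).choose k) • ((⇑δ)^[k] g * (⇑δ)^[j*ε+j-k] (g^ε))
          = (((j*ε+j).choose k : R) * (⇑δ)^[j*ε+j-k] (g^ε)) • (⇑δ)^[k] g := by
        simp only [smul_eq_mul, nsmul_eq_mul]; ring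
      rw [this]
      exact Submodule.smul_mem _ _ (Submodule.subset_span ⟨⟨k, h⟩, rfl⟩)
    · have hsub : j*ε+j-k < j*ε := by
        have h0 : j = 0 → j * ε = 0 := by intro h'; simp [h']
        omega
      have : ((j*ε+j).choose k) • ((⇑δ)^[k] g * (⇑δ)^[j*ε+j-k] (g^ε))
          = (((j*ε+j).choose k : R) * (⇑δ)^[k] g) • (⇑δ)^[j*ε+j-k] (g^ε) := by
        simp only [smul_eq_mul, nsmul_eq_mul]; ring
      rw [this]
      exact Submodule.smul_mem _ _ (lemA δ g j ε _ hsub)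

end Aux


/-- for a derivation `δ` on a commutative ℚ-algebra `R`, `g ∈ R`,
`ε ≥ 1`, `j ≥ 0`:
`δ^[jε](g^ε) = ((jε)!/(j!)^ε)·(δ^[j] g)^ε + Σ_{l<j} p_l · δ^[l] g`,
where `(jε)!/(j!)^ε` is the multinomial coefficient. -/
theorem stmt_5 (R : Type*) [CommRing R] [Algebra ℚ R]
    (δ : Derivation ℚ R R) (g : R) (ε j : ℕ) (hε : 1 ≤ ε) :
    ∃ p : ℕ → R,
      (⇑δ)^[j * ε] (g ^ ε) =
        (Nat.multinomial (Finset.univ : Finset (Fin ε)) (fun _ => j) : R)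
            * ((⇑δ)^[j] g) ^ ε
          + ∑ l ∈ Finset.range j, p l * (⇑δ)^[l] g := by
  have h := mainMem δ g j ε hε
  rw [Submodule.mem_span_range_iff_exists_fun R] at h
  obtain ⟨c, hc⟩ := h
  refine ⟨fun l => if h : l < j then c ⟨l, h⟩ else 0, ?_⟩
  have h2 : ∑ l ∈ range j, (if h : l < j then c ⟨l, h⟩ else 0) * (⇑δ)^[l] g
      = ∑ i : Fin j, c i • (⇑δ)^[i.1] g := by
    rw [Finset.sum_range fun l => (if h : l < j then c ⟨l, h⟩ else 0) * (⇑δ)^[l] g]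
    refine Finset.sum_congr rfl fun i _ => ?_
    simp [i.isLt, smul_eq_mul]
  rw [h2, hc]
  ring
end

section
/- Let x = x₁,…,x_n and u = u₁,…,u_m be differential variables over ℂ, and let f = f₁,…,f_n and g = g₁,…,g_s be polynomials in ℂ[x,u] such that the ideal (g) ⊆ ℂ[x,u] is radical and zero-dimensional. Then 1 belongs to the differential ideal [ẋ − f, g] ⊆ ℂ{x,u} if and only if 1 belongs to the algebraic ideal (ẋ − f, g, ġ) ⊆ ℂ[x, u, ẋ, u̇], where ġ denotes the first total derivatives of the polynomials g. -/
open MvPolynomial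

/-- The differential polynomial ring `ℂ{σ}` modelled as `MvPolynomial (σ × ℕ) ℂ`,
`X (v, i)` standing for the `i`-th derivative of the variable `v`, with the
canonical derivation `X (v, i) ↦ X (v, i+1)`. -/
noncomputable def diffDer (σ : Type*) :
    Derivation ℂ (MvPolynomial (σ × ℕ) ℂ) (MvPolynomial (σ × ℕ) ℂ) :=
  MvPolynomial.mkDerivation ℂ (fun p => MvPolynomial.X (p.1, p.2 + 1))

/-- The differential ideal generated by `S`: the ideal generated by the
elements of `S` together with all their derivatives. -/
def diffIdeal {R : Type*} [CommRing R] (δ : R → R) (S : Set R) : Ideal R :=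
  Ideal.span {r : R | ∃ s ∈ S, ∃ k : ℕ, r = δ^[k] s}

section helpers

variable {σ τ : Type*}

lemma eval_aeval_X (gg : σ → τ) (P : τ → ℂ) (h : MvPolynomial σ ℂ) :
    eval P (aeval (fun v => X (gg v)) h : MvPolynomial τ ℂ)
      = eval (fun v => P (gg v)) h := by
  have : eval P (aeval (fun v => X (gg v)) h : MvPolynomial τ ℂ)
      = (MvPolynomial.aeval P) (aeval (fun v => X (gg v)) h : MvPolynomial τ ℂ) := by
    rfl
  rw [this, comp_aeval_apply]
  simp

lemma eval_diffDer_zero (Q : σ × ℕ → ℂ) (hQ : ∀ v k, Q (v, k + 1) = 0)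
    (r : MvPolynomial (σ × ℕ) ℂ) : eval Q (diffDer σ r) = 0 := by
  induction r using MvPolynomial.induction_on with
  | C a => simp [diffDer, show (C a : MvPolynomial (σ × ℕ) ℂ) = algebraMap ℂ _ a from rfl,
      Derivation.map_algebraMap]
  | add p q hp hq => simp [map_add, hp, hq]
  | mul_X p w hp =>
      rw [Derivation.leibniz]
      simp only [smul_eq_mul, map_add, map_mul, hp, mul_zero, add_zero, zero_mul]
      have : (diffDer σ) (X w) = X (w.1, w.2 + 1) := mkDerivation_X _ _ _
      rw [this]
      simp [hQ w.1 w.2]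

lemma interp_exists {F : Set (σ → ℂ)} (hF : F.Finite) (a : σ → ℂ) :
    ∃ e : MvPolynomial σ ℂ, eval a e = 1 ∧ ∀ c ∈ F, c ≠ a → eval c e = 0 := by
  classical
  set fac : (σ → ℂ) → MvPolynomial σ ℂ := fun c =>
    if h : ∃ v, a v ≠ c v then C (a h.choose - c h.choose)⁻¹ * (X h.choose - C (c h.choose))
    else 1 with hfac
  refine ⟨∏ c ∈ hF.toFinset.erase a, fac c, ?_, ?_⟩
  · rw [map_prod]
    refine Finset.prod_eq_one fun c _ => ?_
    rw [hfac]; dsimp only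
    by_cases h : ∃ v, a v ≠ c v
    · rw [dif_pos h]
      have hv := h.choose_spec
      simp only [map_mul, eval_C, map_sub, eval_X]
      rw [inv_mul_cancel₀ (sub_ne_zero_of_ne hv)]
    · rw [dif_neg h]; simp
  · intro c hc hca
    rw [map_prod]
    have hmem : c ∈ hF.toFinset.erase a := by
      simp [Set.Finite.mem_toFinset, hc, hca]
    refine Finset.prod_eq_zero hmem ?_
    rw [hfac]; dsimp only
    have h : ∃ v, a v ≠ c v := by
      by_contra hno
      push_neg at hno
      exact hca (funext fun v => (hno v).symm)
    rw [dif_pos h]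
    simp

end helpers

section helpers2

variable {σ : Type*} [Fintype σ] [DecidableEq σ]

lemma diffDer_emb (h : MvPolynomial σ ℂ) :
    diffDer σ (aeval (fun v => X (v, 0)) h) =
      ∑ v : σ, (aeval (fun w => X (w, 0)) (pderiv v h) : MvPolynomial (σ × ℕ) ℂ) * X (v, 1) := by
  induction h using MvPolynomial.induction_on with
  | C a =>
      rw [aeval_C]
      simp [show (algebraMap ℂ (MvPolynomial (σ × ℕ) ℂ)) a = C a from rfl,
        show (C a : MvPolynomial (σ × ℕ) ℂ) = algebraMap ℂ _ a from rfl,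
        Derivation.map_algebraMap]
  | add p q hp hq =>
      rw [map_add, map_add, hp, hq, ← Finset.sum_add_distrib]
      refine Finset.sum_congr rfl fun x _ => ?_
      simp only [map_add]; ring
  | mul_X p w hp =>
      rw [map_mul, aeval_X, Derivation.leibniz, hp]
      have hX : (diffDer σ) (X ((w, 0) : σ × ℕ)) = X (w, 1) := mkDerivation_X _ _ _
      rw [hX, smul_eq_mul, smul_eq_mul]
      have key : ∀ x : σ,
          (aeval (fun v => X (v, 0)) ((pderiv x) (p * X w)) : MvPolynomial (σ × ℕ) ℂ) * X (x, 1)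
          = (aeval (fun v => X (v, 0)) ((pderiv x) p) : MvPolynomial (σ × ℕ) ℂ)
              * X (x, 1) * X (w, 0)
            + (if x = w then (aeval (fun v => X (v, 0)) p : MvPolynomial (σ × ℕ) ℂ) * X (x, 1)
                else 0) := by
        intro x
        rw [pderiv_mul, pderiv_X, map_add, map_mul, map_mul, aeval_X, add_mul]
        congr 1
        · ring
        · by_cases hxw : x = w
          · subst hxw; simp [Pi.single_eq_same]
          · simp [Pi.single_eq_of_ne (Ne.symm hxw), hxw]
      rw [Finset.sum_congr rfl (fun x _ => key x), Finset.sum_add_distrib,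
        Finset.sum_ite_eq' Finset.univ w]
      simp only [Finset.mem_univ, if_true]
      rw [add_comm]
      congr 1
      rw [Finset.mul_sum]
      refine Finset.sum_congr rfl fun x _ => ?_
      ring

end helpers2

/-- for a semiexplicit system `ẋ = f(x,u)`, `g(x,u) = 0` whose
algebraic constraint ideal `(g)` is radical and zero-dimensional (finite zero
set), `1` lies in the differential ideal `[ẋ − f, g]` iff `1` lies in the
algebraic ideal `(ẋ − f, g, ġ)`. -/
theorem stmt_7 (n m s : ℕ)
    (f : Fin n → MvPolynomial (Fin n ⊕ Fin m) ℂ)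
    (g : Fin s → MvPolynomial (Fin n ⊕ Fin m) ℂ)
    (hrad : (Ideal.span (Set.range g)).IsRadical)
    (hdim0 : (zeroLocus ℂ (Ideal.span (Set.range g))).Finite) :
    letI δ := diffDer (Fin n ⊕ Fin m)
    letI emb : MvPolynomial (Fin n ⊕ Fin m) ℂ →
        MvPolynomial ((Fin n ⊕ Fin m) × ℕ) ℂ :=
      fun p => aeval (fun v => X (v, 0)) p
    letI Sx : Set (MvPolynomial ((Fin n ⊕ Fin m) × ℕ) ℂ) :=
      Set.range (fun i : Fin n => X (Sum.inl i, 1) - emb (f i))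
    letI Sg : Set (MvPolynomial ((Fin n ⊕ Fin m) × ℕ) ℂ) :=
      Set.range (fun j : Fin s => emb (g j))
    ((1 : MvPolynomial ((Fin n ⊕ Fin m) × ℕ) ℂ) ∈ diffIdeal (⇑δ) (Sx ∪ Sg) ↔
      (1 : MvPolynomial ((Fin n ⊕ Fin m) × ℕ) ℂ) ∈
        Ideal.span (Sx ∪ Sg ∪ (⇑δ '' Sg))) := by
  constructor
  · intro h1
    by_contra hne
    -- transfer to finitely many variables
    set ρ : (Fin n ⊕ Fin m) × Fin 2 → (Fin n ⊕ Fin m) × ℕ :=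
      fun p => (p.1, (p.2 : ℕ)) with hρ
    set emb2 : MvPolynomial (Fin n ⊕ Fin m) ℂ →
        MvPolynomial ((Fin n ⊕ Fin m) × Fin 2) ℂ :=
      fun h => aeval (fun v => X (v, (0 : Fin 2))) h with hemb2
    set sx : Fin n → MvPolynomial ((Fin n ⊕ Fin m) × Fin 2) ℂ :=
      fun i => X (Sum.inl i, (1 : Fin 2)) - emb2 (f i) with hsxdef
    set sg : Fin s → MvPolynomial ((Fin n ⊕ Fin m) × Fin 2) ℂ :=
      fun j => emb2 (g j) with hsgdef
    set sdg : Fin s → MvPolynomial ((Fin n ⊕ Fin m) × Fin 2) ℂ :=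
      fun j => ∑ v : Fin n ⊕ Fin m, emb2 (pderiv v (g j)) * X (v, (1 : Fin 2)) with hsdgdef
    have hrename_emb2 : ∀ h : MvPolynomial (Fin n ⊕ Fin m) ℂ,
        rename ρ (emb2 h) = aeval (fun v => X (v, 0)) h := by
      intro h
      rw [hemb2]; dsimp only
      rw [comp_aeval_apply]
      simp only [rename_X, hρ, Fin.val_zero]
    have hbig_sx : ∀ i, rename ρ (sx i)
        = X (Sum.inl i, 1) - aeval (fun v => X (v, 0)) (f i) := by
      intro i
      rw [hsxdef]; dsimp only
      rw [map_sub, rename_X, hrename_emb2]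
      simp [hρ]
    have hbig_sg : ∀ j, rename ρ (sg j) = aeval (fun v => X (v, 0)) (g j) :=
      fun j => hrename_emb2 _
    have hbig_sdg : ∀ j, rename ρ (sdg j)
        = diffDer (Fin n ⊕ Fin m) (aeval (fun v => X (v, 0)) (g j)) := by
      intro j
      rw [hsdgdef]; dsimp only
      rw [map_sum, diffDer_emb]
      refine Finset.sum_congr rfl fun v _ => ?_
      rw [map_mul, rename_X, hrename_emb2]
      simp [hρ]
    set S2 : Set (MvPolynomial ((Fin n ⊕ Fin m) × Fin 2) ℂ) :=
      Set.range sx ∪ Set.range sg ∪ Set.range sdg with hS2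
    have h1small : (1 : MvPolynomial ((Fin n ⊕ Fin m) × Fin 2) ℂ) ∉ Ideal.span S2 := by
      intro hmem
      apply hne
      have hmap := Ideal.mem_map_of_mem (rename ρ : MvPolynomial ((Fin n ⊕ Fin m) × Fin 2) ℂ →ₐ[ℂ] MvPolynomial ((Fin n ⊕ Fin m) × ℕ) ℂ) hmem
      rw [map_one, Ideal.map_span] at hmap
      refine Ideal.span_mono ?_ hmap
      rintro r ⟨t, ht, rfl⟩
      rcases ht with (⟨i, rfl⟩ | ⟨j, rfl⟩) | ⟨j, rfl⟩
      · exact Or.inl (Or.inl ⟨i, (hbig_sx i).symm⟩)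
      · exact Or.inl (Or.inr ⟨j, (hbig_sg j).symm⟩)
      · exact Or.inr ⟨_, ⟨j, rfl⟩, (hbig_sdg j).symm⟩
    -- get a common zero of the small ideal
    have hzero : ∃ z, z ∈ zeroLocus ℂ (Ideal.span S2) := by
      by_contra hempty
      push_neg at hempty
      have hE : zeroLocus ℂ (Ideal.span S2) = ∅ :=
        Set.eq_empty_iff_forall_notMem.2 hempty
      have hr := vanishingIdeal_zeroLocus_eq_radical (K := ℂ) (Ideal.span S2)
      rw [hE, vanishingIdeal_empty] at hr
      have h1r : (1 : MvPolynomial ((Fin n ⊕ Fin m) × Fin 2) ℂ) ∈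
          (Ideal.span S2).radical := by rw [← hr]; exact Submodule.mem_top
      obtain ⟨k, hk⟩ := h1r
      rw [one_pow] at hk
      exact h1small hk
    obtain ⟨z, hz⟩ := hzero
    rw [mem_zeroLocus_iff] at hz
    set a : (Fin n ⊕ Fin m) → ℂ := fun v => z (v, (0 : Fin 2)) with hadef
    set P : (Fin n ⊕ Fin m) × ℕ → ℂ :=
      fun p => if h : p.2 < 2 then z (p.1, ⟨p.2, h⟩) else 0 with hPdef
    have hPa : (fun v => P (v, 0)) = a := by
      funext v
      rw [hPdef]; dsimp only
      rw [dif_pos (by norm_num : (0:ℕ) < 2)]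
      rfl
    have hPρ : ∀ x, eval P (rename ρ x) = eval z x := by
      intro x
      rw [eval_rename]
      have hcomp : P ∘ ρ = z := by
        funext p
        show P (p.1, (p.2 : ℕ)) = z p
        rw [hPdef]; dsimp only
        rw [dif_pos p.2.isLt]
      rw [hcomp]
    have hP_emb : ∀ h : MvPolynomial (Fin n ⊕ Fin m) ℂ,
        eval P (aeval (fun v => X (v, 0)) h) = eval a h := by
      intro h
      rw [eval_aeval_X (fun v => ((v, 0) : (Fin n ⊕ Fin m) × ℕ)) P h, hPa]
    have hz_emb2 : ∀ h : MvPolynomial (Fin n ⊕ Fin m) ℂ, eval z (emb2 h) = eval a h := by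
      intro h
      rw [hemb2]; dsimp only
      exact eval_aeval_X (fun v => ((v, (0 : Fin 2)))) z h
    have hz_sx : ∀ i, eval z (sx i) = 0 :=
      fun i => hz _ (Ideal.subset_span (Or.inl (Or.inl ⟨i, rfl⟩)))
    have hz_sg : ∀ j, eval z (sg j) = 0 :=
      fun j => hz _ (Ideal.subset_span (Or.inl (Or.inr ⟨j, rfl⟩)))
    have hz_sdg : ∀ j, eval z (sdg j) = 0 :=
      fun j => hz _ (Ideal.subset_span (Or.inr ⟨j, rfl⟩))
    -- the ideal of polynomials vanishing at `a` together with their formal derivative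
    set J : Ideal (MvPolynomial (Fin n ⊕ Fin m) ℂ) :=
      { carrier := {h | eval a h = 0 ∧
          eval P (diffDer (Fin n ⊕ Fin m) (aeval (fun v => X (v, 0)) h)) = 0},
        zero_mem' := by simp
        add_mem' := by
          intro p q hp hq
          exact ⟨by simp only [map_add, hp.1, hq.1, add_zero],
            by simp only [map_add, hp.2, hq.2, add_zero]⟩
        smul_mem' := by
          intro c h hh
          refine ⟨by simp only [smul_eq_mul, map_mul, hh.1, mul_zero], ?_⟩
          simp only [smul_eq_mul, map_mul]
          rw [Derivation.leibniz, smul_eq_mul, smul_eq_mul, map_add, map_mul, map_mul,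
            hh.2, mul_zero, zero_add, hP_emb, hh.1, zero_mul] } with hJdef
    have hIJ : Ideal.span (Set.range g) ≤ J := by
      rw [Ideal.span_le]
      rintro t ⟨j, rfl⟩
      refine ⟨?_, ?_⟩
      · exact (hz_emb2 (g j)) ▸ hz_sg j
      · rw [← hbig_sdg j, hPρ]
        exact hz_sdg j
    -- all first derivatives vanish at the common zero
    have hb : ∀ v, z (v, (1 : Fin 2)) = 0 := by
      intro v
      obtain ⟨e, he1, he2⟩ := interp_exists hdim0 a
      have hmemI : (X v - C (a v)) * e ∈ Ideal.span (Set.range g) := by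
        rw [← hrad.radical, ← vanishingIdeal_zeroLocus_eq_radical (K := ℂ)]
        intro c hc
        by_cases hca : c = a
        · subst hca
          simp [map_mul]
        · rw [aeval_eq_eval, map_mul, he2 c hc hca, mul_zero]
      have hmemJ := hIJ hmemI
      have h2 := hmemJ.2
      rw [map_mul, Derivation.leibniz, smul_eq_mul, smul_eq_mul, map_add, map_mul, map_mul] at h2
      have e1 : eval P (aeval (fun w => X (w, 0)) (X v - C (a v)) :
          MvPolynomial ((Fin n ⊕ Fin m) × ℕ) ℂ) = 0 := by
        rw [hP_emb]
        simp
      have e2 : eval P (aeval (fun w => X (w, 0)) e :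
          MvPolynomial ((Fin n ⊕ Fin m) × ℕ) ℂ) = 1 := by rw [hP_emb, he1]
      have e3 : eval P (diffDer (Fin n ⊕ Fin m)
          (aeval (fun w => X (w, 0)) (X v - C (a v)))) = z (v, (1 : Fin 2)) := by
        rw [map_sub, aeval_X, aeval_C, map_sub]
        have : (diffDer (Fin n ⊕ Fin m)) (X ((v, 0) : (Fin n ⊕ Fin m) × ℕ)) = X (v, 1) :=
          mkDerivation_X _ _ _
        rw [this]
        have hC : (diffDer (Fin n ⊕ Fin m)) (algebraMap ℂ _ (a v)) = 0 :=
          Derivation.map_algebraMap _ _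
        rw [hC, map_sub, map_zero, sub_zero, eval_X]
        rw [hPdef]; dsimp only
        rw [dif_pos (by norm_num : (1:ℕ) < 2)]
        rfl
      rw [e1, e2, e3, zero_mul, one_mul, zero_add] at h2
      exact h2
    have hP1 : ∀ (v : Fin n ⊕ Fin m) (k : ℕ), P (v, k + 1) = 0 := by
      intro v k
      rw [hPdef]; dsimp only
      cases k with
      | zero =>
          rw [dif_pos (by norm_num : (1:ℕ) < 2)]
          exact hb v
      | succ k => rw [dif_neg (by omega)]
    have hfa : ∀ i, eval a (f i) = 0 := by
      intro i
      have := hz_sx i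
      rw [hsxdef] at this; dsimp only at this
      rw [map_sub, eval_X, hz_emb2] at this
      have hb1 := hb (Sum.inl i)
      rw [hb1, zero_sub, neg_eq_zero] at this
      exact this
    -- evaluation at the constant solution kills the differential ideal
    have hker : eval P (1 : MvPolynomial ((Fin n ⊕ Fin m) × ℕ) ℂ) = 0 := by
      have hle : diffIdeal (⇑(diffDer (Fin n ⊕ Fin m)))
          (Set.range (fun i : Fin n => X (Sum.inl i, 1)
              - aeval (fun v => X (v, 0)) (f i)) ∪
            Set.range (fun j : Fin s => aeval (fun v => X (v, 0)) (g j)))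
          ≤ RingHom.ker (eval P) := by
        rw [diffIdeal, Ideal.span_le]
        rintro r ⟨t, ht, k, rfl⟩
        rw [SetLike.mem_coe, RingHom.mem_ker]
        cases k with
        | zero =>
            simp only [Function.iterate_zero, id_eq]
            rcases ht with ⟨i, rfl⟩ | ⟨j, rfl⟩
            · rw [map_sub, eval_X, hP_emb, hfa i, sub_zero]
              exact hP1 (Sum.inl i) 0
            · rw [hP_emb]
              have := hz_sg j
              rw [hsgdef] at this; dsimp only at this
              rw [hz_emb2] at this
              exact this
        | succ k =>
            rw [Function.iterate_succ_apply']
            exact eval_diffDer_zero P hP1 _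
      exact hle h1
    rw [map_one] at hker
    exact one_ne_zero hker
  · intro h1
    refine Ideal.span_mono ?_ h1
    rintro r ((hr | hr) | ⟨t, ht, rfl⟩)
    · exact ⟨r, Or.inl hr, 0, rfl⟩
    · exact ⟨r, Or.inr hr, 0, rfl⟩
    · exact ⟨t, Or.inr ht, 1, (Function.iterate_one _).symm ▸ rfl⟩
end

section
/- Let x = x₁,…,x_n be differential variables and f = f₁,…,f_s differential polynomials in ℂ[x, ẋ, …, x^{(e)}] with e ≥ 1. Introduce new variables z_{i,j} for 1 ≤ i ≤ n, 0 ≤ j ≤ e, and set z_j = (z_{1,j},…,z_{n,j}) and f̄_k = f_k(z₀,…,z_e). Then 1 ∈ [f] in ℂ{x} if and only if 1 ∈ [ż₀ − z₁, …, ż_{e−1} − z_e, f̄] in ℂ{z₀,…,z_e}. -/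
open MvPolynomial

lemma diffDer_X {σ : Type*} (v : σ) (m : ℕ) :
    diffDer σ (X (v, m)) = X (v, m + 1) :=
  mkDerivation_X ℂ _ (v, m)

lemma diffDer_iter_X {σ : Type*} (v : σ) (m k : ℕ) :
    (⇑(diffDer σ))^[k] (X (v, m)) = X (v, m + k) := by
  induction k generalizing m with
  | zero => simp
  | succ k ih =>
      rw [Function.iterate_succ_apply, diffDer_X, ih, Nat.add_assoc, Nat.add_comm 1 k]

/-- The "collapse" algebra map `φ : ℂ{z} → ℂ{x}`, `z_{i,j}^{(k)} ↦ x_i^{(j+k)}`. -/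
noncomputable def phiMap (n e : ℕ) :
    MvPolynomial ((Fin n × Fin (e + 1)) × ℕ) ℂ →ₐ[ℂ] MvPolynomial (Fin n × ℕ) ℂ :=
  aeval (fun q : (Fin n × Fin (e + 1)) × ℕ => X (q.1.1, (q.1.2 : ℕ) + q.2))

/-- The section `ψ : ℂ{x} → ℂ{z}`, `x_i^{(m)} ↦ z_{i,0}^{(m)}`. -/
noncomputable def psiMap (n e : ℕ) :
    MvPolynomial (Fin n × ℕ) ℂ →ₐ[ℂ] MvPolynomial ((Fin n × Fin (e + 1)) × ℕ) ℂ :=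
  aeval (fun p : Fin n × ℕ => X ((p.1, (0 : Fin (e + 1))), p.2))

lemma phiMap_X (n e : ℕ) (q : (Fin n × Fin (e + 1)) × ℕ) :
    phiMap n e (X q) = X (q.1.1, (q.1.2 : ℕ) + q.2) := by
  simp [phiMap]

lemma phiMap_diff (n e : ℕ) (b : MvPolynomial ((Fin n × Fin (e + 1)) × ℕ) ℂ) :
    phiMap n e (diffDer _ b) = diffDer _ (phiMap n e b) := by
  induction b using MvPolynomial.induction_on with
  | C a => simp [Derivation.map_algebraMap, ← MvPolynomial.algebraMap_eq]
  | add p q hp hq => simp [hp, hq]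
  | mul_X p v hp =>
      have hXv : phiMap n e (diffDer _ (X v)) = diffDer _ (phiMap n e (X v)) := by
        obtain ⟨⟨i, j⟩, k⟩ := v
        rw [diffDer_X (σ := Fin n × Fin (e+1)) (i, j) k, phiMap_X, phiMap_X,
          diffDer_X (σ := Fin n) i ((j : ℕ) + k)]
        simp [Nat.add_assoc]
      rw [Derivation.leibniz, map_add, smul_eq_mul, smul_eq_mul, map_mul, map_mul,
        hp, hXv, map_mul, Derivation.leibniz, smul_eq_mul, smul_eq_mul]

lemma phiMap_diff_iter (n e : ℕ) (k : ℕ)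
    (b : MvPolynomial ((Fin n × Fin (e + 1)) × ℕ) ℂ) :
    phiMap n e ((⇑(diffDer _))^[k] b) = (⇑(diffDer _))^[k] (phiMap n e b) := by
  induction k generalizing b with
  | zero => rfl
  | succ k ih =>
      rw [Function.iterate_succ_apply, Function.iterate_succ_apply, ih, phiMap_diff]

/-- order reduction: let `F₁,…,F_s` be polynomials in the
variables `x_i^{(j)}`, `0 ≤ j ≤ e` (i.e. differential polynomials of order
`≤ e` in `ℂ{x₁,…,x_n}`), and let `z_{i,j}` be new differential variables.
Then `1 ∈ [F]` in `ℂ{x}` iff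
`1 ∈ [ż₀ − z₁, …, ż_{e−1} − z_e, F̄]` in `ℂ{z₀,…,z_e}`,
where `F̄_k = F_k(z₀,…,z_e)`. -/
theorem stmt_15 (n s e : ℕ) (he : 1 ≤ e)
    (F : Fin s → MvPolynomial (Fin n × Fin (e + 1)) ℂ) :
    letI δ₁ := diffDer (Fin n)
    letI f : Fin s → MvPolynomial (Fin n × ℕ) ℂ :=
      fun k => aeval (fun p : Fin n × Fin (e + 1) => X (p.1, (p.2 : ℕ))) (F k)
    letI δ₂ := diffDer (Fin n × Fin (e + 1))
    letI fbar : Fin s → MvPolynomial ((Fin n × Fin (e + 1)) × ℕ) ℂ :=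
      fun k => aeval (fun p : Fin n × Fin (e + 1) => X (p, 0)) (F k)
    letI Sz : Set (MvPolynomial ((Fin n × Fin (e + 1)) × ℕ) ℂ) :=
      Set.range (fun q : Fin n × Fin e =>
        X ((q.1, Fin.castSucc q.2), 1) - X ((q.1, Fin.succ q.2), 0))
    ((1 : MvPolynomial (Fin n × ℕ) ℂ) ∈ diffIdeal (⇑δ₁) (Set.range f) ↔
      (1 : MvPolynomial ((Fin n × Fin (e + 1)) × ℕ) ℂ) ∈
        diffIdeal (⇑δ₂) (Sz ∪ Set.range fbar)) := by
  set δ₁ := diffDer (Fin n) with hδ₁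
  set δ₂ := diffDer (Fin n × Fin (e + 1)) with hδ₂
  set f : Fin s → MvPolynomial (Fin n × ℕ) ℂ :=
    fun k => aeval (fun p : Fin n × Fin (e + 1) => X (p.1, (p.2 : ℕ))) (F k) with hf
  set fbar : Fin s → MvPolynomial ((Fin n × Fin (e + 1)) × ℕ) ℂ :=
    fun k => aeval (fun p : Fin n × Fin (e + 1) => X (p, 0)) (F k) with hfbar
  set Sz : Set (MvPolynomial ((Fin n × Fin (e + 1)) × ℕ) ℂ) :=
    Set.range (fun q : Fin n × Fin e =>
      X ((q.1, Fin.castSucc q.2), 1) - X ((q.1, Fin.succ q.2), 0)) with hSz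
  set φ := phiMap n e with hφ
  set ψ := psiMap n e with hψ
  -- φ sends fbar to f
  have hφfbar : ∀ k, φ (fbar k) = f k := by
    intro k
    show phiMap n e (aeval (fun p : Fin n × Fin (e + 1) => X (p, 0)) (F k)) =
      aeval (fun p : Fin n × Fin (e + 1) => X (p.1, (p.2 : ℕ))) (F k)
    rw [phiMap, comp_aeval_apply]
    simp
  -- derivatives of Sz generators
  have hgen : ∀ (i : Fin n) (j : Fin e) (k : ℕ),
      (⇑δ₂)^[k] (X ((i, Fin.castSucc j), 1) - X ((i, Fin.succ j), 0)) =
        X ((i, Fin.castSucc j), 1 + k) - X ((i, Fin.succ j), k) := by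
    intro i j k
    induction k with
    | zero => simp
    | succ k ih =>
        rw [Function.iterate_succ_apply', ih, map_sub,
          diffDer_X (σ := Fin n × Fin (e+1)) (i, Fin.castSucc j) (1 + k),
          diffDer_X (σ := Fin n × Fin (e+1)) (i, Fin.succ j) k,
          Nat.add_assoc]
  -- the differential ideal generated by Sz
  set I := diffIdeal (⇑δ₂) Sz with hI
  have hgenI : ∀ (i : Fin n) (j : Fin e) (k : ℕ),
      X ((i, Fin.castSucc j), k + 1) - X ((i, Fin.succ j), k) ∈ I := by
    intro i j k
    apply Ideal.subset_span
    refine ⟨X ((i, Fin.castSucc j), 1) - X ((i, Fin.succ j), 0), ⟨(i, j), rfl⟩, k, ?_⟩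
    rw [hgen i j k, Nat.add_comm 1 k]
  -- every b is congruent to ψ (φ b) mod I
  have hXmem : ∀ (i : Fin n) (j : Fin (e + 1)) (k : ℕ),
      X ((i, j), k) - X ((i, (0 : Fin (e + 1))), (j : ℕ) + k) ∈ I := by
    intro i j
    induction j using Fin.induction with
    | zero => intro k; simp
    | succ j ih =>
        intro k
        have h1 := hgenI i j k
        have h2 := ih (k + 1)
        have := I.sub_mem h2 h1
        have heq : (X ((i, Fin.castSucc j), k + 1) :
              MvPolynomial ((Fin n × Fin (e + 1)) × ℕ) ℂ) -
            X ((i, (0 : Fin (e + 1))), (Fin.castSucc j : ℕ) + (k + 1)) -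
            (X ((i, Fin.castSucc j), k + 1) - X ((i, Fin.succ j), k)) =
            X ((i, Fin.succ j), k) -
              X ((i, (0 : Fin (e + 1))), ((Fin.succ j : ℕ)) + k) := by
          rw [Fin.coe_castSucc, Fin.val_succ,
            show (j : ℕ) + 1 + k = (j : ℕ) + (k + 1) by omega]
          ring
        rwa [heq] at this
  have hsub : ∀ b : MvPolynomial ((Fin n × Fin (e + 1)) × ℕ) ℂ,
      b - ψ (φ b) ∈ I := by
    intro b
    induction b using MvPolynomial.induction_on with
    | C a => simp [hψ, hφ, psiMap, phiMap]
    | add p q hp hq =>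
        have := I.add_mem hp hq
        rw [map_add, map_add] at *
        convert this using 1
        ring
    | mul_X p v hp =>
        rw [map_mul, map_mul]
        have hv : X v - ψ (φ (X v)) ∈ I := by
          obtain ⟨⟨i, j⟩, k⟩ := v
          rw [hφ, phiMap_X, hψ, psiMap]
          simp only [aeval_X]
          exact hXmem i j k
        have : p * X v - ψ (φ p) * ψ (φ (X v)) =
            p * (X v - ψ (φ (X v))) + ψ (φ (X v)) * (p - ψ (φ p)) := by ring
        rw [this]
        exact I.add_mem (I.mul_mem_left _ hv) (I.mul_mem_left _ hp)
  constructor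
  · -- forward: lift via ψ
    intro h1
    have hlift : ∀ r ∈ {r : MvPolynomial (Fin n × ℕ) ℂ |
        ∃ g ∈ Set.range f, ∃ k : ℕ, r = (⇑δ₁)^[k] g},
        ψ r ∈ diffIdeal (⇑δ₂) (Sz ∪ Set.range fbar) := by
      rintro r ⟨g, ⟨k0, rfl⟩, k, rfl⟩
      have key : (⇑δ₁)^[k] (f k0) = φ ((⇑δ₂)^[k] (fbar k0)) := by
        rw [phiMap_diff_iter, hφfbar]
      rw [key]
      have h2 : (⇑δ₂)^[k] (fbar k0) ∈ diffIdeal (⇑δ₂) (Sz ∪ Set.range fbar) :=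
        Ideal.subset_span ⟨fbar k0, Or.inr ⟨k0, rfl⟩, k, rfl⟩
      have h3 : ψ (φ ((⇑δ₂)^[k] (fbar k0))) =
          (⇑δ₂)^[k] (fbar k0) - ((⇑δ₂)^[k] (fbar k0) - ψ (φ ((⇑δ₂)^[k] (fbar k0)))) := by
        ring
      rw [h3]
      have hIle : I ≤ diffIdeal (⇑δ₂) (Sz ∪ Set.range fbar) := by
        apply Ideal.span_mono
        rintro r ⟨s, hs, k, rfl⟩
        exact ⟨s, Or.inl hs, k, rfl⟩
      exact Ideal.sub_mem _ h2 (hIle (hsub _))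
    have : (1 : MvPolynomial ((Fin n × Fin (e+1)) × ℕ) ℂ) = ψ 1 := by simp
    rw [this]
    rw [diffIdeal] at h1
    -- map the span membership through ψ
    have := Ideal.mem_map_of_mem (ψ : MvPolynomial (Fin n × ℕ) ℂ →+*
        MvPolynomial ((Fin n × Fin (e+1)) × ℕ) ℂ) h1
    rw [Ideal.map_span] at this
    refine Ideal.span_le.mpr ?_ this
    rintro r ⟨r', hr', rfl⟩
    exact hlift r' hr'
  · -- backward: push via φ
    intro h1
    have hpush : ∀ r ∈ {r : MvPolynomial ((Fin n × Fin (e+1)) × ℕ) ℂ |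
        ∃ g ∈ Sz ∪ Set.range fbar, ∃ k : ℕ, r = (⇑δ₂)^[k] g},
        φ r ∈ diffIdeal (⇑δ₁) (Set.range f) := by
      rintro r ⟨g, hg, k, rfl⟩
      rw [phiMap_diff_iter]
      rcases hg with hg | ⟨k0, rfl⟩
      · obtain ⟨⟨i, j⟩, rfl⟩ := hg
        have : φ (X ((i, Fin.castSucc j), 1) - X ((i, Fin.succ j), 0)) = 0 := by
          rw [map_sub, hφ, phiMap_X, phiMap_X]
          simp [Fin.coe_castSucc, Fin.val_succ]
        rw [this]
        simp
      · rw [hφfbar]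
        exact Ideal.subset_span ⟨f k0, ⟨k0, rfl⟩, k, rfl⟩
    have : (1 : MvPolynomial (Fin n × ℕ) ℂ) = φ 1 := by simp
    rw [this]
    rw [diffIdeal] at h1
    have := Ideal.mem_map_of_mem (φ : MvPolynomial ((Fin n × Fin (e+1)) × ℕ) ℂ →+*
        MvPolynomial (Fin n × ℕ) ℂ) h1
    rw [Ideal.map_span] at this
    refine Ideal.span_le.mpr ?_ this
    rintro r ⟨r', hr', rfl⟩
    exact hpush r' hr'
end

section
/- In the differential polynomial ring ℂ{x₁, u₁,…,u_m}, consider the system ẋ₁ = 1 together with the constraints g: u_m − x₁², u_{m−1} − u_m², …, u₁ − u₂², u₁². Then the element 1 belongs to the differential ideal [ẋ₁ − 1, g], but 1 does NOT belong to the algebraic ideal generated by (ẋ₁ − 1)^{[L]} and g^{[L]} for any L < 2^{m+1}. -/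
open MvPolynomial

namespace Stmt18Aux

abbrev A (m : ℕ) : Type := MvPolynomial ((Unit ⊕ Fin m) × ℕ) ℂ

/-- The generating set of the system. -/
def Sset (m : ℕ) (hm : 0 < m) : Set (A m) :=
  {X (Sum.inl (), 1) - 1} ∪
      {X (Sum.inr ⟨m - 1, Nat.sub_lt hm Nat.one_pos⟩, 0) - (X (Sum.inl (), 0)) ^ 2} ∪
    {r | ∃ k : ℕ, ∃ h : k + 1 < m,
      r = X (Sum.inr ⟨k, Nat.lt_of_succ_lt h⟩, 0) - (X (Sum.inr ⟨k + 1, h⟩, 0) : A m) ^ 2} ∪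
    {(X (Sum.inr ⟨0, hm⟩, 0) : A m) ^ 2}

lemma dX (m : ℕ) (p : (Unit ⊕ Fin m) × ℕ) :
    diffDer (Unit ⊕ Fin m) (X p) = X (p.1, p.2 + 1) := by
  simp [diffDer, mkDerivation_X]

/-- An ideal spanned by a δ-closed set is δ-closed. -/
lemma span_closed {R : Type*} [CommRing R] [Algebra ℂ R] (d : Derivation ℂ R R) (T : Set R)
    (hT : ∀ t ∈ T, d t ∈ T) : ∀ r ∈ Ideal.span T, d r ∈ Ideal.span T := by
  intro r hr
  refine Submodule.span_induction (fun x hx => Ideal.subset_span (hT x hx)) ?_ ?_ ?_ hr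
  · rw [map_zero]; exact zero_mem _
  · intro a b _ _ ha hb
    rw [map_add]; exact add_mem ha hb
  · intro a t ht hdt
    rw [smul_eq_mul, Derivation.leibniz, smul_eq_mul, smul_eq_mul]
    exact add_mem (Ideal.mul_mem_left _ _ hdt) (Ideal.mul_mem_right _ _ ht)

section Part1

variable (m : ℕ) (hm : 0 < m)

lemma part1 : (1 : A m) ∈ diffIdeal (⇑(diffDer (Unit ⊕ Fin m))) (Sset m hm) := by
  set δ := diffDer (Unit ⊕ Fin m) with hδdef
  set T : Set (A m) := {r : A m | ∃ s ∈ Sset m hm, ∃ k : ℕ, r = (⇑δ)^[k] s} with hT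
  show (1 : A m) ∈ Ideal.span T
  set I := Ideal.span T with hI
  have hTclosed : ∀ t ∈ T, δ t ∈ T := by
    rintro t ⟨s, hs, k, rfl⟩
    exact ⟨s, hs, k + 1, (Function.iterate_succ_apply' _ _ _).symm⟩
  have hSI : ∀ s ∈ Sset m hm, s ∈ I := fun s hs => Ideal.subset_span ⟨s, hs, 0, rfl⟩
  have hclosed : ∀ r ∈ I, δ r ∈ I := span_closed δ T hTclosed
  set x : A m := X (Sum.inl (), 0) with hx
  -- x' - 1 ∈ I
  have hx' : (X (Sum.inl (), 1) - 1 : A m) ∈ I := by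
    refine hSI _ ?_
    simp [Sset]
  -- u_k - x^(2^(m-k)) ∈ I
  have key : ∀ i, ∀ k (hk : k < m), m - k = i + 1 →
      (X (Sum.inr ⟨k, hk⟩, 0) : A m) - x ^ (2 ^ (i + 1)) ∈ I := by
    intro i
    induction i with
    | zero =>
      intro k hk hmk
      have hk1 : k = m - 1 := by omega
      subst hk1
      refine hSI _ ?_
      left; left; right; rfl
    | succ i ih =>
      intro k hk hmk
      have hk1 : k + 1 < m := by omega
      have ih' := ih (k + 1) hk1 (by omega)
      have hgen : (X (Sum.inr ⟨k, hk⟩, 0) : A m) - (X (Sum.inr ⟨k + 1, hk1⟩, 0)) ^ 2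
          ∈ I := by
        refine hSI _ ?_
        left; right
        exact ⟨k, hk1, rfl⟩
      have hid : (X (Sum.inr ⟨k, hk⟩, 0) : A m) - x ^ (2 ^ (i + 1 + 1)) =
          ((X (Sum.inr ⟨k, hk⟩, 0) : A m) - (X (Sum.inr ⟨k + 1, hk1⟩, 0)) ^ 2) +
            ((X (Sum.inr ⟨k + 1, hk1⟩, 0)) + x ^ (2 ^ (i + 1))) *
              ((X (Sum.inr ⟨k + 1, hk1⟩, 0)) - x ^ (2 ^ (i + 1))) := by
        have h2 : (2 : ℕ) ^ (i + 1 + 1) = 2 ^ (i + 1) * 2 := pow_succ 2 (i + 1)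
        rw [h2, pow_mul]
        ring
      rw [hid]
      exact add_mem hgen (Ideal.mul_mem_left _ _ ih')
  have hu0 : (X (Sum.inr ⟨0, hm⟩, 0) : A m) - x ^ (2 ^ m) ∈ I := by
    have := key (m - 1) 0 hm (by omega)
    have hme : m - 1 + 1 = m := by omega
    rwa [hme] at this
  have hu0sq : ((X (Sum.inr ⟨0, hm⟩, 0) : A m)) ^ 2 ∈ I := by
    refine hSI _ ?_
    right; rfl
  -- x^(2^(m+1)) ∈ I
  have hxN : x ^ (2 ^ (m + 1)) ∈ I := by
    have hid : x ^ (2 ^ (m + 1)) =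
        ((X (Sum.inr ⟨0, hm⟩, 0) : A m)) ^ 2 -
          ((X (Sum.inr ⟨0, hm⟩, 0) : A m) + x ^ (2 ^ m)) *
            ((X (Sum.inr ⟨0, hm⟩, 0) : A m) - x ^ (2 ^ m)) := by
      have h2 : (2 : ℕ) ^ (m + 1) = 2 ^ m * 2 := pow_succ 2 m
      rw [h2, pow_mul]
      ring
    rw [hid]
    exact sub_mem hu0sq (Ideal.mul_mem_left _ _ hu0)
  -- descent
  have hdesc : ∀ n : ℕ, x ^ (n + 1) ∈ I → x ^ n ∈ I := by
    intro n h
    have h1 : δ (x ^ (n + 1)) ∈ I := hclosed _ h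
    rw [Derivation.leibniz_pow] at h1
    have hdx : δ x = X (Sum.inl (), 1) := dX m _
    rw [hdx] at h1
    simp only [Nat.add_sub_cancel, smul_eq_mul, nsmul_eq_mul] at h1
    -- h1 : ((n+1 : ℕ) : A m) * (x ^ n * X (inl,1)) ∈ I
    have h2 : ((n + 1 : ℕ) : A m) * (x ^ n * (X (Sum.inl (), 1) - 1)) ∈ I :=
      Ideal.mul_mem_left _ _ (Ideal.mul_mem_left _ _ hx')
    have h3 : ((n + 1 : ℕ) : A m) * x ^ n ∈ I := by
      have hid : ((n + 1 : ℕ) : A m) * x ^ n =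
          ((n + 1 : ℕ) : A m) * (x ^ n * X (Sum.inl (), 1)) -
            ((n + 1 : ℕ) : A m) * (x ^ n * (X (Sum.inl (), 1) - 1)) := by ring
      rw [hid]
      exact sub_mem h1 h2
    have h4 : C (((n + 1 : ℕ) : ℂ)⁻¹) * (((n + 1 : ℕ) : A m) * x ^ n) ∈ I :=
      Ideal.mul_mem_left _ _ h3
    have hcast : ((n + 1 : ℕ) : A m) = C (((n + 1 : ℕ) : ℂ)) := (map_natCast C (n + 1)).symm
    rw [hcast, ← mul_assoc, ← C_mul, inv_mul_cancel₀ (Nat.cast_ne_zero.mpr (Nat.succ_ne_zero n)),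
      C_1, one_mul] at h4
    exact h4
  have hall : ∀ n : ℕ, x ^ n ∈ I → (1 : A m) ∈ I := by
    intro n
    induction n with
    | zero => intro h; simpa using h
    | succ k ih => intro h; exact ih (hdesc k h)
  exact hall _ hxN

end Part1

section Part2

open Polynomial

/-- The truncated solution evaluation into `ℂ[t]`. -/
noncomputable def Φ (m : ℕ) : A m →ₐ[ℂ] Polynomial ℂ :=
  MvPolynomial.aeval (fun p : (Unit ⊕ Fin m) × ℕ =>
    Polynomial.derivative^[p.2]
      (Sum.elim (fun _ => (Polynomial.X : ℂ[X]))
        (fun k : Fin m => (Polynomial.X : ℂ[X]) ^ (2 ^ (m - k.1))) p.1))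

lemma Phi_X (m : ℕ) (p : (Unit ⊕ Fin m) × ℕ) :
    Φ m (X p) = Polynomial.derivative^[p.2]
      (Sum.elim (fun _ => (Polynomial.X : ℂ[X]))
        (fun k : Fin m => (Polynomial.X : ℂ[X]) ^ (2 ^ (m - k.1))) p.1) := by
  simp [Φ]

lemma Phi_comm (m : ℕ) (r : A m) :
    Φ m (diffDer (Unit ⊕ Fin m) r) = Polynomial.derivative (Φ m r) := by
  induction r using MvPolynomial.induction_on with
  | C a => simp [MvPolynomial.derivation_C, map_zero]
  | add p q hp hq => simp [map_add, hp, hq]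
  | mul_X p n hp =>
    rw [Derivation.leibniz, smul_eq_mul, smul_eq_mul, map_add, map_mul, map_mul,
      map_mul, Polynomial.derivative_mul, hp, dX]
    have : Φ m (X (n.1, n.2 + 1)) = Polynomial.derivative (Φ m (X n)) := by
      rw [Phi_X, Phi_X]
      exact Function.iterate_succ_apply' _ _ _
    rw [this]
    ring

lemma Phi_comm_iter (m : ℕ) (j : ℕ) (r : A m) :
    Φ m ((⇑(diffDer (Unit ⊕ Fin m)))^[j] r) = Polynomial.derivative^[j] (Φ m r) := by
  induction j generalizing r with
  | zero => rfl
  | succ j ih =>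
    rw [Function.iterate_succ_apply, Function.iterate_succ_apply, ih, Phi_comm]

lemma iter_C_mul (j : ℕ) (a : ℂ) (p : ℂ[X]) :
    Polynomial.derivative^[j] (Polynomial.C a * p) =
      Polynomial.C a * Polynomial.derivative^[j] p := by
  induction j generalizing p with
  | zero => rfl
  | succ j ih =>
    rw [Function.iterate_succ_apply, Function.iterate_succ_apply,
      Polynomial.derivative_C_mul, ih]

lemma eval0_iter_pow : ∀ j N : ℕ, j < N →
    Polynomial.eval (0 : ℂ) (Polynomial.derivative^[j] ((Polynomial.X : ℂ[X]) ^ N)) = 0 := by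
  intro j
  induction j with
  | zero =>
    intro N hN
    simp [zero_pow (by omega : N ≠ 0)]
  | succ j ih =>
    intro N hN
    rw [Function.iterate_succ_apply, Polynomial.derivative_X_pow, iter_C_mul]
    simp [ih (N - 1) (by omega)]

lemma part2 (m : ℕ) (hm : 0 < m) : ∀ L : ℕ, L < 2 ^ (m + 1) →
    (1 : A m) ∉ Ideal.span {r : A m | ∃ s ∈ Sset m hm, ∃ j ≤ L,
      r = (⇑(diffDer (Unit ⊕ Fin m)))^[j] s} := by
  intro L hL hmem
  set ψ : A m →+* ℂ := (Polynomial.evalRingHom (0 : ℂ)).comp (Φ m).toRingHom with hψ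
  have hker : Ideal.span {r : A m | ∃ s ∈ Sset m hm, ∃ j ≤ L,
      r = (⇑(diffDer (Unit ⊕ Fin m)))^[j] s} ≤ RingHom.ker ψ := by
    rw [Ideal.span_le]
    rintro r ⟨s, hs, j, hj, rfl⟩
    rw [SetLike.mem_coe, RingHom.mem_ker]
    have hval : ψ ((⇑(diffDer (Unit ⊕ Fin m)))^[j] s) =
        Polynomial.eval 0 (Polynomial.derivative^[j] (Φ m s)) := by
      simp [hψ, Phi_comm_iter]
    rw [hval]
    rcases hs with ((hs1 | hs2) | hs3) | hs4
    · -- x' - 1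
      rw [Set.mem_singleton_iff] at hs1
      subst hs1
      have : Φ m ((X (Sum.inl (), 1) : A m) - 1) = 0 := by
        rw [map_sub, map_one, Phi_X]
        simp
      rw [this, Function.iterate_fixed (map_zero _) j, Polynomial.eval_zero]
    · -- u_{m-1} - x^2
      rw [Set.mem_singleton_iff] at hs2
      subst hs2
      have : Φ m ((X (Sum.inr ⟨m - 1, Nat.sub_lt hm Nat.one_pos⟩, 0) : A m) -
          (X (Sum.inl (), 0)) ^ 2) = 0 := by
        rw [map_sub, map_pow, Phi_X, Phi_X]
        simp only [Sum.elim_inl, Sum.elim_inr, Function.iterate_zero, id_eq]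
        have : m - (m - 1) = 1 := by omega
        rw [this]
        ring
      rw [this, Function.iterate_fixed (map_zero _) j, Polynomial.eval_zero]
    · -- u_k - u_{k+1}^2
      obtain ⟨k, hk1, rfl⟩ := hs3
      have : Φ m ((X (Sum.inr ⟨k, Nat.lt_of_succ_lt hk1⟩, 0) : A m) -
          (X (Sum.inr ⟨k + 1, hk1⟩, 0)) ^ 2) = 0 := by
        rw [map_sub, map_pow, Phi_X, Phi_X]
        simp only [Sum.elim_inr, Function.iterate_zero, id_eq]
        have h1 : m - k = (m - (k + 1)) + 1 := by omega
        rw [h1, pow_succ, pow_mul]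
        ring
      rw [this, Function.iterate_fixed (map_zero _) j, Polynomial.eval_zero]
    · -- u_0^2
      rw [Set.mem_singleton_iff] at hs4
      subst hs4
      have : Φ m (((X (Sum.inr ⟨0, hm⟩, 0)) : A m) ^ 2) =
          (Polynomial.X : ℂ[X]) ^ (2 ^ (m + 1)) := by
        rw [map_pow, Phi_X]
        simp only [Sum.elim_inr, Function.iterate_zero, id_eq, Nat.sub_zero]
        rw [← pow_mul, ← pow_succ]
      rw [this]
      exact eval0_iter_pow j (2 ^ (m + 1)) (by omega)
  have h1 := hker hmem
  rw [RingHom.mem_ker, map_one] at h1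
  exact one_ne_zero h1

end Part2

end Stmt18Aux

/-- the Golubitzky et al. example: in `ℂ{x₁, u₁, …, u_m}`, for
the system `ẋ₁ = 1`, `u_m − x₁² = 0`, `u_j − u_{j+1}² = 0` (`1 ≤ j ≤ m−1`),
`u₁² = 0`: the element `1` lies in the differential ideal
`[ẋ₁ − 1, g]`, but not in the algebraic ideal generated by the derivatives of
the generators up to any order `L < 2^{m+1}`. -/
theorem stmt_18 (m : ℕ) (hm : 0 < m) :
    letI σ := Unit ⊕ Fin m
    letI δ := diffDer σ
    letI x : MvPolynomial (σ × ℕ) ℂ := X (Sum.inl (), 0)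
    letI u : Fin m → MvPolynomial (σ × ℕ) ℂ := fun k => X (Sum.inr k, 0)
    letI S : Set (MvPolynomial (σ × ℕ) ℂ) :=
      {X (Sum.inl (), 1) - 1} ∪ {u ⟨m - 1, Nat.sub_lt hm Nat.one_pos⟩ - x ^ 2} ∪
        {r | ∃ k : ℕ, ∃ h : k + 1 < m,
          r = u ⟨k, Nat.lt_of_succ_lt h⟩ - (u ⟨k + 1, h⟩) ^ 2} ∪
        {(u ⟨0, hm⟩) ^ 2}
    ((1 : MvPolynomial (σ × ℕ) ℂ) ∈ diffIdeal (⇑δ) S ∧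
      ∀ L : ℕ, L < 2 ^ (m + 1) →
        (1 : MvPolynomial (σ × ℕ) ℂ) ∉
          Ideal.span {r | ∃ s ∈ S, ∃ j ≤ L, r = (⇑δ)^[j] s}) := by
  exact ⟨Stmt18Aux.part1 m hm, Stmt18Aux.part2 m hm⟩
end
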